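/- Finite-time blowup of the semi-implicit Euler iteration, conditional probabilistic form (Lemma 5.1). Let (Ω,𝓕,P) be a probability space, let I = (0,1) with Lebesgue measure, let τ > 0, q ≥ 0, C₀ ∈ (0,1], and let Φ : L²(I) → L²(I) be a linear map satisfying ‖Φ v‖²_{L²} ≥ C₀·‖v‖²_{L²} for all v ∈ L²(I). Let (u_n)_{n∈ℕ} and (w_n)_{n≥1} be sequences of measurable maps from Ω into functions on I such that: for each n, almost surely u_n(ω) ∈ L⁶(I) and w_{n+1}(ω) ∈ L²(I); the expectations E‖u_n‖²_{L²}, E‖u_n‖⁴_{L⁴}, E‖u_n‖⁶_{L⁶}, E‖w_{n+1}‖²_{L²} are finite; E[⟨u_n − τ·u_n³, w_{n+1}⟩_{L²}] = 0 and E‖w_{n+1}‖²_{L²} = 2qτ for each n (where u_n³ is the pointwise cube); and almost surely u_{n+1} = Φ( u_n − τ·u_n³ + w_{n+1} ) in L²(I). Then there exists a constant a₀ ≥ 1, depending only on C₀, τ, q, such that if E‖u₀‖²_{L²} ≥ √(a₀), then E‖u_n‖²_{L²} ≥ E‖u₀‖²_{L²} + n·τ for all n ∈ ℕ, so E‖u_n‖²_{L²}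 → ∞ as n → ∞. -/

import Mathlib

open MeasureTheory Filter
open scoped ENNReal

lemma cube_jensen {α : Type*} [MeasurableSpace α] {μ : Measure α} [IsProbabilityMeasure μ]
    {f : α → ℝ} (h0 : ∀ᵐ x ∂μ, 0 ≤ f x) (hfi : Integrable f μ)
    (h3 : Integrable (fun x => f x ^ 3) μ) :
    (∫ x, f x ∂μ) ^ 3 ≤ ∫ x, f x ^ 3 ∂μ :=
  (convexOn_pow 3).map_integral_le ((continuous_pow 3).continuousOn) isClosed_Ici h0 hfi h3

lemma pow6_int {μ : Measure ℝ} {f : ℝ → ℝ} (hf : MemLp f 6 μ) :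
    Integrable (fun x => f x ^ 6) μ := by
  have h := hf.integrable_norm_rpow (by norm_num) (by norm_num)
  refine h.congr ?_
  filter_upwards with x
  rw [show ((6:ℝ≥0∞).toReal) = ((6:ℕ):ℝ) by norm_num, Real.rpow_natCast]
  rw [Real.norm_eq_abs, pow_abs, abs_of_nonneg (by positivity)]


/-- Finite-time blowup of the semi-implicit Euler iteration, conditional
probabilistic form (Lemma 5.1).  Here `I = (0,1)` carries Lebesgue measure,
states are real-valued functions on the line (thought of as functions on `I`,
all norms being computed over `I`), `Φ` plays the role of the resolvent
`(I - τΔ_h)⁻¹` and `w (n+1)` of the scaled noise increment `√2 δW^{n+1}`. -/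
theorem semi_implicit_euler_finite_time_blowup
    {Ω : Type*} [MeasurableSpace Ω] (P : Measure Ω) [IsProbabilityMeasure P]
    (τ q C₀ : ℝ) (hτ : 0 < τ) (hq : 0 ≤ q) (hC₀ : C₀ ∈ Set.Ioc (0 : ℝ) 1) :
    ∃ a₀ : ℝ, 1 ≤ a₀ ∧
      -- `a₀` depends only on `C₀`, `τ`, `q`
      ∀ (Φ : (ℝ → ℝ) →ₗ[ℝ] (ℝ → ℝ)),
        -- lower bound `‖Φ v‖² ≥ C₀ ‖v‖²` on L²(I)
        (∀ v : ℝ → ℝ, MemLp v 2 (volume.restrict (Set.Ioo (0 : ℝ) 1)) →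
          C₀ * ∫ x in Set.Ioo (0 : ℝ) 1, (v x) ^ 2 ≤
            ∫ x in Set.Ioo (0 : ℝ) 1, (Φ v x) ^ 2) →
        ∀ u w : ℕ → Ω → ℝ → ℝ,
          -- almost surely u_n(ω) ∈ L⁶(I), w_{n+1}(ω) ∈ L²(I)
          (∀ n, ∀ᵐ ω ∂P, MemLp (u n ω) 6 (volume.restrict (Set.Ioo (0 : ℝ) 1))) →
          (∀ n, ∀ᵐ ω ∂P, MemLp (w (n + 1) ω) 2 (volume.restrict (Set.Ioo (0 : ℝ) 1))) →
          -- finiteness of the expectations E‖u_n‖²_{L²}, E‖u_n‖⁴_{L⁴},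
          -- E‖u_n‖⁶_{L⁶} and E‖w_{n+1}‖²_{L²}
          (∀ n, Integrable (fun ω => ∫ x in Set.Ioo (0 : ℝ) 1, (u n ω x) ^ 2) P) →
          (∀ n, Integrable (fun ω => ∫ x in Set.Ioo (0 : ℝ) 1, (u n ω x) ^ 4) P) →
          (∀ n, Integrable (fun ω => ∫ x in Set.Ioo (0 : ℝ) 1, (u n ω x) ^ 6) P) →
          (∀ n, Integrable (fun ω => ∫ x in Set.Ioo (0 : ℝ) 1, (w (n + 1) ω x) ^ 2) P) →
          -- E⟨u_n − τ u_n³, w_{n+1}⟩ = 0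
          (∀ n, ∫ ω, (∫ x in Set.Ioo (0 : ℝ) 1,
              (u n ω x - τ * (u n ω x) ^ 3) * w (n + 1) ω x) ∂P = 0) →
          -- E‖w_{n+1}‖²_{L²} = 2qτ
          (∀ n, ∫ ω, (∫ x in Set.Ioo (0 : ℝ) 1, (w (n + 1) ω x) ^ 2) ∂P = 2 * q * τ) →
          -- almost surely u_{n+1} = Φ(u_n − τ u_n³ + w_{n+1}) in L²(I)
          (∀ n, ∀ᵐ ω ∂P,
            u (n + 1) ω =ᵐ[volume.restrict (Set.Ioo (0 : ℝ) 1)]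
              Φ (fun x => u n ω x - τ * (u n ω x) ^ 3 + w (n + 1) ω x)) →
          -- conclusion: blowup of the second moment for large data
          Real.sqrt a₀ ≤ ∫ ω, (∫ x in Set.Ioo (0 : ℝ) 1, (u 0 ω x) ^ 2) ∂P →
            (∀ n : ℕ,
              (∫ ω, (∫ x in Set.Ioo (0 : ℝ) 1, (u 0 ω x) ^ 2) ∂P) + n * τ ≤
                ∫ ω, (∫ x in Set.Ioo (0 : ℝ) 1, (u n ω x) ^ 2) ∂P) ∧
            Tendsto (fun n : ℕ => ∫ ω, (∫ x in Set.Ioo (0 : ℝ) 1, (u n ω x) ^ 2) ∂P)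
              atTop atTop := by
  obtain ⟨hC0, hC1⟩ := hC₀
  set μ : Measure ℝ := volume.restrict (Set.Ioo (0 : ℝ) 1) with hμdef
  haveI : IsProbabilityMeasure μ := by
    constructor
    rw [hμdef, Measure.restrict_apply_univ, Real.volume_Ioo]
    norm_num
  set A : ℝ := C₀ * τ ^ 2 / 4 with hAdef
  have hApos : 0 < A := by positivity
  set s₀ : ℝ := 1 + 3 / A + 2 * (2 * q + 1) * τ / A with hsdef
  have h3A : 0 ≤ 3 / A := by positivity
  have hcA : 0 ≤ 2 * (2 * q + 1) * τ / A := by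
    apply div_nonneg _ hApos.le; nlinarith
  have hs1 : 1 ≤ s₀ := by rw [hsdef]; linarith
  refine ⟨s₀ ^ 2, by nlinarith, ?_⟩
  intro Φ hΦ u w hu6 hw2 hInt2 hInt4 hInt6 hIntw hcross hwvar hrec h0
  rw [Real.sqrt_sq (by linarith)] at h0
  set X : ℕ → ℝ := fun n => ∫ ω, (∫ x, (u n ω x) ^ 2 ∂μ) ∂P with hXdef
  have hXnonneg : ∀ n, 0 ≤ X n := fun n =>
    integral_nonneg fun ω => integral_nonneg fun x => sq_nonneg _
  -- the key recursion
  have key : ∀ n, A * X n ^ 3 - X n / 2 - 2 * q * τ ≤ X (n + 1) := by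
    intro n
    have hae : ∀ᵐ ω ∂P,
        C₀ * ((τ ^ 2 / 4) * (∫ x, (u n ω x) ^ 6 ∂μ) - (1 / 2) * (∫ x, (u n ω x) ^ 2 ∂μ)
          - ∫ x, (w (n + 1) ω x) ^ 2 ∂μ) ≤ ∫ x, (u (n + 1) ω x) ^ 2 ∂μ := by
      filter_upwards [hu6 n, hw2 n, hrec n] with ω hu hw hr
      set f : ℝ → ℝ := u n ω with hfdef
      set g : ℝ → ℝ := w (n + 1) ω with hgdef
      set v : ℝ → ℝ := fun x => f x - τ * f x ^ 3 + g x with hvdef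
      have hfm : AEStronglyMeasurable f μ := hu.aestronglyMeasurable
      have hf2 : MemLp f 2 μ := hu.mono_exponent (by norm_num)
      have hif2 : Integrable (fun x => f x ^ 2) μ := hf2.integrable_sq
      have hif6 : Integrable (fun x => f x ^ 6) μ := pow6_int hu
      have hf3 : MemLp (fun x => f x ^ 3) 2 μ := by
        refine (memLp_two_iff_integrable_sq
          ((hfm.aemeasurable.pow_const 3).aestronglyMeasurable)).mpr ?_
        exact hif6.congr (Eventually.of_forall fun x => by ring)
      have hig2 : Integrable (fun x => g x ^ 2) μ := hw.integrable_sq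
      have hv : MemLp v 2 μ := (hf2.sub (hf3.const_mul τ)).add hw
      have hiv : Integrable (fun x => v x ^ 2) μ := hv.integrable_sq
      have ha6 : Integrable (fun x => (τ ^ 2 / 4) * f x ^ 6) μ := hif6.const_mul _
      have ha2 : Integrable (fun x => (1 / 2) * f x ^ 2) μ := hif2.const_mul _
      have ha62 : Integrable (fun x => (τ ^ 2 / 4) * f x ^ 6 - (1 / 2) * f x ^ 2) μ :=
        ha6.sub ha2
      have hILHS : Integrable
          (fun x => (τ ^ 2 / 4) * f x ^ 6 - (1 / 2) * f x ^ 2 - g x ^ 2) μ :=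
        ha62.sub hig2
      have h1 : ∫ x, ((τ ^ 2 / 4) * f x ^ 6 - (1 / 2) * f x ^ 2 - g x ^ 2) ∂μ
          ≤ ∫ x, v x ^ 2 ∂μ := by
        refine integral_mono hILHS hiv fun x => ?_
        have hv' : v x = f x - τ * f x ^ 3 + g x := rfl
        nlinarith [sq_nonneg (f x - τ * f x ^ 3 + 2 * g x),
          sq_nonneg (f x * (τ * f x ^ 2 - 2))]
      have hsplit : ∫ x, ((τ ^ 2 / 4) * f x ^ 6 - (1 / 2) * f x ^ 2 - g x ^ 2) ∂μ
          = (τ ^ 2 / 4) * (∫ x, f x ^ 6 ∂μ) - (1 / 2) * (∫ x, f x ^ 2 ∂μ)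
            - ∫ x, g x ^ 2 ∂μ := by
        rw [integral_sub ha62 hig2, integral_sub ha6 ha2,
          integral_const_mul, integral_const_mul]
      have h2 := hΦ v hv
      have h3 : ∫ x, (Φ v x) ^ 2 ∂μ = ∫ x, (u (n + 1) ω x) ^ 2 ∂μ := by
        refine integral_congr_ae (hr.mono fun x hx => ?_)
        dsimp only
        rw [hx]
      calc C₀ * ((τ ^ 2 / 4) * (∫ x, f x ^ 6 ∂μ) - (1 / 2) * (∫ x, f x ^ 2 ∂μ)
            - ∫ x, g x ^ 2 ∂μ)
          ≤ C₀ * ∫ x, v x ^ 2 ∂μ := by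
            apply mul_le_mul_of_nonneg_left _ hC0.le
            rw [← hsplit]; exact h1
        _ ≤ ∫ x, (Φ v x) ^ 2 ∂μ := h2
        _ = ∫ x, (u (n + 1) ω x) ^ 2 ∂μ := h3
    have hb6 : Integrable (fun ω => (τ ^ 2 / 4) * (∫ x, (u n ω x) ^ 6 ∂μ)) P :=
      (hInt6 n).const_mul _
    have hb2 : Integrable (fun ω => (1 / 2) * (∫ x, (u n ω x) ^ 2 ∂μ)) P :=
      (hInt2 n).const_mul _
    have hb62 : Integrable (fun ω => (τ ^ 2 / 4) * (∫ x, (u n ω x) ^ 6 ∂μ)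
        - (1 / 2) * (∫ x, (u n ω x) ^ 2 ∂μ)) P := hb6.sub hb2
    have hbw : Integrable (fun ω => (τ ^ 2 / 4) * (∫ x, (u n ω x) ^ 6 ∂μ)
        - (1 / 2) * (∫ x, (u n ω x) ^ 2 ∂μ) - ∫ x, (w (n + 1) ω x) ^ 2 ∂μ) P :=
      hb62.sub (hIntw n)
    have hRint : Integrable (fun ω =>
        C₀ * ((τ ^ 2 / 4) * (∫ x, (u n ω x) ^ 6 ∂μ) - (1 / 2) * (∫ x, (u n ω x) ^ 2 ∂μ)
          - ∫ x, (w (n + 1) ω x) ^ 2 ∂μ)) P := hbw.const_mul _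
    have h4 := integral_mono_ae hRint (hInt2 (n + 1)) hae
    have h5 : ∫ ω, (C₀ * ((τ ^ 2 / 4) * (∫ x, (u n ω x) ^ 6 ∂μ)
          - (1 / 2) * (∫ x, (u n ω x) ^ 2 ∂μ) - ∫ x, (w (n + 1) ω x) ^ 2 ∂μ)) ∂P
        = C₀ * ((τ ^ 2 / 4) * (∫ ω, (∫ x, (u n ω x) ^ 6 ∂μ) ∂P) - (1 / 2) * X n
            - 2 * q * τ) := by
      rw [integral_const_mul, integral_sub hb62 (hIntw n), integral_sub hb6 hb2,
        integral_const_mul, integral_const_mul, hwvar n]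
    rw [h5] at h4
    -- Jensen
    have hinner : ∀ᵐ ω ∂P, (∫ x, (u n ω x) ^ 2 ∂μ) ^ 3 ≤ ∫ x, (u n ω x) ^ 6 ∂μ := by
      filter_upwards [hu6 n] with ω hu
      have hif2 : Integrable (fun x => (u n ω x) ^ 2) μ :=
        (hu.mono_exponent (by norm_num)).integrable_sq
      have hif6 : Integrable (fun x => (u n ω x) ^ 6) μ := pow6_int hu
      have := cube_jensen (f := fun x => (u n ω x) ^ 2)
        (Eventually.of_forall fun x => sq_nonneg _) hif2
        (hif6.congr (Eventually.of_forall fun x => by ring))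
      calc (∫ x, (u n ω x) ^ 2 ∂μ) ^ 3 ≤ ∫ x, ((u n ω x) ^ 2) ^ 3 ∂μ := this
        _ = ∫ x, (u n ω x) ^ 6 ∂μ :=
          integral_congr_ae (Eventually.of_forall fun x => by ring)
    have hF3int : Integrable (fun ω => (∫ x, (u n ω x) ^ 2 ∂μ) ^ 3) P := by
      refine Integrable.mono' (hInt6 n)
        (((hInt2 n).aestronglyMeasurable.aemeasurable.pow_const 3).aestronglyMeasurable) ?_
      filter_upwards [hinner] with ω hω
      rw [Real.norm_eq_abs, abs_of_nonneg (by positivity)]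
      exact hω
    have hjen : X n ^ 3 ≤ ∫ ω, (∫ x, (u n ω x) ^ 6 ∂μ) ∂P := by
      calc X n ^ 3 ≤ ∫ ω, (∫ x, (u n ω x) ^ 2 ∂μ) ^ 3 ∂P :=
            cube_jensen (Eventually.of_forall fun ω => integral_nonneg fun x => sq_nonneg _)
              (hInt2 n) hF3int
        _ ≤ ∫ ω, (∫ x, (u n ω x) ^ 6 ∂μ) ∂P := integral_mono_ae hF3int (hInt6 n) hinner
    have hXn := hXnonneg n
    have h4' : C₀ * ((τ ^ 2 / 4) * (∫ ω, (∫ x, (u n ω x) ^ 6 ∂μ) ∂P) - (1 / 2) * X n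
        - 2 * q * τ) ≤ X (n + 1) := h4
    rw [hAdef]
    nlinarith [h4', hjen, hXn,
      mul_nonneg (mul_nonneg hC0.le (sq_nonneg τ)) (sub_nonneg.2 hjen),
      mul_nonneg (sub_nonneg.2 hC1) hXn,
      mul_nonneg (mul_nonneg (sub_nonneg.2 hC1) hq) hτ.le]
  -- step: above threshold, gain τ each step
  have step : ∀ n, s₀ ≤ X n → X n + τ ≤ X (n + 1) := by
    intro n hXn
    have hx1 : 1 ≤ X n := le_trans (by rw [hsdef]; linarith) hXn
    have hxx : X n ≤ X n ^ 3 := by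
      nlinarith [mul_nonneg (mul_nonneg (by linarith : (0:ℝ) ≤ X n)
        (by linarith : (0:ℝ) ≤ X n - 1)) (by linarith : (0:ℝ) ≤ X n + 1)]
    have hx2 : X n ≤ X n ^ 2 := by
      nlinarith [mul_nonneg (by linarith : (0:ℝ) ≤ X n) (by linarith : (0:ℝ) ≤ X n - 1)]
    have k2 : 3 * X n ≤ A * X n ^ 3 := by
      have h1 : 3 / A ≤ X n ^ 2 := by
        have : 3 / A ≤ X n := le_trans (by rw [hsdef]; linarith) hXn
        linarith
      have : 3 ≤ A * X n ^ 2 := by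
        rw [div_le_iff₀ hApos] at h1; linarith
      nlinarith
    have k3 : 2 * (2 * q + 1) * τ ≤ A * X n ^ 3 := by
      have h1 : 2 * (2 * q + 1) * τ / A ≤ X n ^ 3 := by
        have : 2 * (2 * q + 1) * τ / A ≤ X n := le_trans (by rw [hsdef]; linarith) hXn
        linarith
      rw [div_le_iff₀ hApos] at h1; linarith
    linarith [key n]
  -- induction
  have hmono : ∀ n : ℕ, X 0 + n * τ ≤ X n := by
    intro n
    induction n with
    | zero => simp
    | succ n ih =>
      have hs0 : s₀ ≤ X n := by
        have : (0:ℝ) ≤ n * τ := by positivity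
        linarith [h0, ih]
      have := step n hs0
      push_cast
      linarith
  refine ⟨hmono, ?_⟩
  apply tendsto_atTop_mono hmono
  apply tendsto_atTop_add_const_left
  exact Tendsto.atTop_mul_const hτ tendsto_natCast_atTop_atTop
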